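/- Suppose F: ℝ^n → ℝ^n is Newton differentiable on K ⊂ ℝ^n with Newton derivative DF, x̄ ∈ K satisfies F(x̄) = 0, and there are ε > 0 and M > 0 such that DF(x) is invertible with ‖DF(x)^{-1}‖ ≤ M for all x ∈ B_ε(x̄). Then there exists δ > 0 such that for any x_0 ∈ B_δ(x̄), the Newton iteration x_{k+1} = x_k − DF(x_k)^{-1} F(x_k) is well defined and the sequence (x_k) converges superlinearly to x̄, i.e., ‖x_{k+1} − x̄‖ = o(‖x_k − x̄‖). -/

import Mathlib

open Asymptotics Filter

theorem stmt_5 (n : ℕ) (F : (Fin n → ℝ) → Fin n → ℝ)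
    (DF : (Fin n → ℝ) → ((Fin n → ℝ) →L[ℝ] (Fin n → ℝ)))
    (K : Set (Fin n → ℝ)) (xb : Fin n → ℝ) (hxbK : xb ∈ K)
    (hNewton : ∀ x ∈ K,
      (fun h => F (x + h) - F x - DF (x + h) h) =o[nhds (0 : Fin n → ℝ)] (fun h => h))
    (hFxb : F xb = 0) (ε M : ℝ) (hε : 0 < ε) (hM : 0 < M)
    (hinv : ∀ x ∈ Metric.closedBall xb ε,
      ∃ B : (Fin n → ℝ) →L[ℝ] (Fin n → ℝ),
        (DF x).comp B = ContinuousLinearMap.id ℝ (Fin n → ℝ) ∧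
        B.comp (DF x) = ContinuousLinearMap.id ℝ (Fin n → ℝ) ∧ ‖B‖ ≤ M) :
    ∃ δ > (0 : ℝ), ∀ x0 ∈ Metric.closedBall xb δ,
      ∃ x : ℕ → Fin n → ℝ,
        x 0 = x0 ∧
        (∀ k, DF (x k) (x (k + 1) - x k) = -F (x k)) ∧
        Filter.Tendsto x Filter.atTop (nhds xb) ∧
        ∀ c > (0 : ℝ), ∃ N : ℕ, ∀ k ≥ N, ‖x (k + 1) - xb‖ ≤ c * ‖x k - xb‖ := by
  classical
  have hphi := hNewton xb hxbK
  set φ : (Fin n → ℝ) → (Fin n → ℝ) := fun h => F (xb + h) - F xb - DF (xb + h) h with hφ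
  have h2M : (0:ℝ) < 1 / (2 * M) := by positivity
  obtain ⟨r, hr, hball⟩ := Metric.eventually_nhds_iff.1 (hphi.def h2M)
  set δ := min ε (r / 2) with hδdef
  have hδ : 0 < δ := lt_min hε (by positivity)
  have hδε : δ ≤ ε := min_le_left _ _
  have hδr : δ < r := lt_of_le_of_lt (min_le_right _ _) (by linarith)
  refine ⟨δ, hδ, ?_⟩
  intro x0 hx0
  set Binv : (Fin n → ℝ) → ((Fin n → ℝ) →L[ℝ] (Fin n → ℝ)) :=
    fun y => if h : y ∈ Metric.closedBall xb ε then (hinv y h).choose else 0 with hBinv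
  set g : (Fin n → ℝ) → (Fin n → ℝ) := fun y => y - Binv y (F y) with hg
  have key : ∀ y, y ∈ Metric.closedBall xb ε →
      g y - xb = -(Binv y (φ (y - xb))) ∧ DF y (g y - y) = -(F y) := by
    intro y hy
    have hBeq : Binv y = (hinv y hy).choose := dif_pos hy
    obtain ⟨h1, h2, _h3⟩ := (hinv y hy).choose_spec
    have hid1 : ∀ v, DF y ((hinv y hy).choose v) = v := by
      intro v
      have := DFunLike.congr_fun h1 v
      simpa using this
    have hid2 : ∀ v, (hinv y hy).choose (DF y v) = v := by
      intro v
      have := DFunLike.congr_fun h2 v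
      simpa using this
    constructor
    · have hφy : φ (y - xb) = F y - DF y (y - xb) := by
        simp [hφ, hFxb]
      rw [hBeq, hφy, map_sub, hid2]
      simp only [hg, hBeq]
      abel
    · have hgy : g y - y = -((hinv y hy).choose (F y)) := by
        simp [hg, hBeq]
      rw [hgy, map_neg, hid1]
  have keynorm : ∀ y, y ∈ Metric.closedBall xb ε →
      ‖g y - xb‖ ≤ M * ‖φ (y - xb)‖ := by
    intro y hy
    rw [(key y hy).1, norm_neg]
    calc ‖Binv y (φ (y - xb))‖ ≤ ‖Binv y‖ * ‖φ (y - xb)‖ := (Binv y).le_opNorm _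
    _ ≤ M * ‖φ (y - xb)‖ := by
        have hBle : ‖Binv y‖ ≤ M := by
          rw [show Binv y = (hinv y hy).choose from dif_pos hy]
          exact ((hinv y hy).choose_spec).2.2
        exact mul_le_mul_of_nonneg_right hBle (norm_nonneg _)
  set x : ℕ → (Fin n → ℝ) := fun k => Nat.rec x0 (fun _ y => g y) k with hx
  have hx0' : x 0 = x0 := rfl
  have hxsucc : ∀ k, x (k+1) = g (x k) := fun _ => rfl
  have hbound : ∀ k, ‖x k - xb‖ ≤ (1/2)^k * δ := by
    intro k
    induction k with
    | zero =>
      have := Metric.mem_closedBall.1 hx0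
      rw [dist_eq_norm] at this
      simpa [hx0'] using this
    | succ k ih =>
      have hle : (1/2:ℝ)^k * δ ≤ δ :=
        mul_le_of_le_one_left hδ.le
          (pow_le_one₀ (by norm_num) (by norm_num))
      have hmem : x k ∈ Metric.closedBall xb ε := by
        rw [Metric.mem_closedBall, dist_eq_norm]
        exact le_trans ih (le_trans hle hδε)
      have hsmall : dist (x k - xb) 0 < r := by
        rw [dist_zero_right]
        exact lt_of_le_of_lt (le_trans ih hle) hδr
      have hφb := hball hsmall
      calc ‖x (k+1) - xb‖ = ‖g (x k) - xb‖ := by rw [hxsucc]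
      _ ≤ M * ‖φ (x k - xb)‖ := keynorm _ hmem
      _ ≤ M * (1/(2*M) * ‖x k - xb‖) :=
          mul_le_mul_of_nonneg_left hφb hM.le
      _ = (1/2) * ‖x k - xb‖ := by field_simp
      _ ≤ (1/2) * ((1/2)^k * δ) := by linarith
      _ = (1/2)^(k+1) * δ := by ring
  have h0 : Tendsto (fun k : ℕ => (1/2:ℝ)^k * δ) atTop (nhds 0) := by
    have := tendsto_pow_atTop_nhds_zero_of_lt_one (by norm_num : (0:ℝ) ≤ 1/2)
      (by norm_num : (1/2:ℝ) < 1)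
    simpa using this.mul_const δ
  have htend : Tendsto x atTop (nhds xb) := by
    rw [tendsto_iff_norm_sub_tendsto_zero]
    exact squeeze_zero (fun k => norm_nonneg _) hbound h0
  refine ⟨x, hx0', ?_, htend, ?_⟩
  · intro k
    have hmem : x k ∈ Metric.closedBall xb ε := by
      rw [Metric.mem_closedBall, dist_eq_norm]
      refine le_trans (hbound k) (le_trans ?_ hδε)
      exact mul_le_of_le_one_left hδ.le (pow_le_one₀ (by norm_num) (by norm_num))
    have := (key (x k) hmem).2
    rw [hxsucc]
    exact this
  · intro c hc
    have hcM : (0:ℝ) < c / M := by positivity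
    obtain ⟨s, hs, hsball⟩ := Metric.eventually_nhds_iff.1 (hphi.def hcM)
    obtain ⟨N, hN⟩ := (eventually_atTop.1 (h0.eventually (gt_mem_nhds hs)))
    refine ⟨N, fun k hk => ?_⟩
    have hmem : x k ∈ Metric.closedBall xb ε := by
      rw [Metric.mem_closedBall, dist_eq_norm]
      refine le_trans (hbound k) (le_trans ?_ hδε)
      exact mul_le_of_le_one_left hδ.le (pow_le_one₀ (by norm_num) (by norm_num))
    have hsmall : dist (x k - xb) 0 < s := by
      rw [dist_zero_right]
      exact lt_of_le_of_lt (hbound k) (hN k hk)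
    have hφb := hsball hsmall
    calc ‖x (k+1) - xb‖ = ‖g (x k) - xb‖ := by rw [hxsucc]
    _ ≤ M * ‖φ (x k - xb)‖ := keynorm _ hmem
    _ ≤ M * (c/M * ‖x k - xb‖) := mul_le_mul_of_nonneg_left hφb hM.le
    _ = c * ‖x k - xb‖ := by field_simp
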